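/- arXiv:2301.05044 — 2 statements merged into one kernel-verified Lean document; each statement's English description precedes it below -/
import Mathlib

section
/- Let k ≥ 2, T > 0, and g : [0,∞) → ℝ nonnegative measurable, supported on [0,T], with ∫₀^∞ g² = Υ > 0 and μ = (∫₀^∞ u g(u)² du)/Υ satisfying μ + T/k < 1. Then the integral of ∏_{j=2}^k g(u_j)² over the region {u_j ≥ 0, Σ_{j=2}^k u_j > k − T} is at most Υ^{k-1} · μT/((k−1)Θ²), where Θ = (k−T)/(k−1) − μ. -/
open MeasureTheory Real

theorem stmt_8 (k : ℕ) (hk : 2 ≤ k) (T : ℝ) (hT : 0 < T) (g : ℝ → ℝ) (Υ μ : ℝ)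
    (hg_meas : Measurable g) (hg_nonneg : ∀ u, 0 ≤ g u)
    (hg_supp : ∀ u, u ∉ Set.Icc 0 T → g u = 0)
    (hΥ : ∫ u in Set.Ioi (0:ℝ), (g u)^2 = Υ) (hΥpos : 0 < Υ)
    (hμ : μ = (∫ u in Set.Ioi (0:ℝ), u * (g u)^2) / Υ)
    (hsmall : μ + T / k < 1) :
    ∫ u in {u : Fin (k-1) → ℝ | (∀ j, 0 ≤ u j) ∧ (k:ℝ) - T < ∑ j, u j},
        ∏ j, (g (u j))^2
      ≤ Υ^(k-1) * (μ * T / (((k:ℝ) - 1) * (((k:ℝ) - T)/((k:ℝ) - 1) - μ)^2)) := by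
  classical
  obtain ⟨f, hf⟩ : ∃ f : ℝ → ℝ, f = fun u => (g u)^2 := ⟨_, rfl⟩
  have hf' : ∀ v, (g v)^2 = f v := fun v => by rw [hf]
  simp only [hf'] at hΥ hμ ⊢
  -- basic facts about f
  have hf_meas : Measurable f := by rw [hf]; exact hg_meas.pow_const 2
  have hf_nn : ∀ u, 0 ≤ f u := fun u => by rw [hf]; positivity
  have hf0 : ∀ u, u ∉ Set.Icc 0 T → f u = 0 := fun u hu => by
    rw [hf]; simp [hg_supp u hu]
  have hfneg : ∀ u : ℝ, u < 0 → f u = 0 := fun u hu =>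
    hf0 u (by simp only [Set.mem_Icc, not_and]; intro h; linarith)
  have hkR : (2:ℝ) ≤ (k:ℝ) := by exact_mod_cast hk
  have hkpos : (0:ℝ) < k := by linarith
  set N : ℝ := (k:ℝ) - 1 with hN_def
  have hNpos : 0 < N := by simp only [hN_def]; linarith
  have hKN : ((k - 1 : ℕ) : ℝ) = N := by
    rw [Nat.cast_sub (by omega : 1 ≤ k)]; simp [hN_def]
  -- integrability of f
  have hIoi : IntegrableOn f (Set.Ioi (0:ℝ)) := by
    by_contra h
    rw [integral_undef h] at hΥ
    exact absurd hΥ.symm hΥpos.ne'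
  have hf_int : Integrable f := by
    have h1 : IntegrableOn f (Set.Iio (0:ℝ)) := by
      rw [integrableOn_congr_fun (g := fun _ => (0:ℝ))
        (fun x hx => hfneg x (Set.mem_Iio.mp hx)) measurableSet_Iio]
      exact integrableOn_zero
    have h2 : IntegrableOn f (Set.Ici (0:ℝ)) := by
      rwa [integrableOn_Ici_iff_integrableOn_Ioi]
    have := h1.union h2
    rwa [Set.Iio_union_Ici, integrableOn_univ] at this
  have hΥ' : ∫ u, f u = Υ := by
    rw [← setIntegral_eq_integral_of_forall_compl_eq_zero
      (s := Set.Ici (0:ℝ)) (fun x hx => hfneg x (by simpa using hx)),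
      integral_Ici_eq_integral_Ioi]
    exact hΥ
  -- the function ψ u = u * f u
  set ψ : ℝ → ℝ := fun u => u * f u with hψ_def
  have hψ_nn : ∀ u, 0 ≤ ψ u := by
    intro u
    by_cases hu : u ∈ Set.Icc 0 T
    · exact mul_nonneg hu.1 (hf_nn u)
    · simp [hψ_def, hf0 u hu]
  have hψ_le : ∀ u, ψ u ≤ T * f u := by
    intro u
    by_cases hu : u ∈ Set.Icc 0 T
    · exact mul_le_mul_of_nonneg_right hu.2 (hf_nn u)
    · simp [hψ_def, hf0 u hu]
  have hψ_meas : Measurable ψ := measurable_id.mul hf_meas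
  have hψ_int : Integrable ψ := by
    refine (hf_int.const_mul T).mono' hψ_meas.aestronglyMeasurable
      (Filter.Eventually.of_forall fun u => ?_)
    rw [Real.norm_eq_abs, abs_of_nonneg (hψ_nn u)]
    exact hψ_le u
  have hψ_val : ∫ u, ψ u = μ * Υ := by
    have h0 : ∫ u in Set.Ioi (0:ℝ), u * f u = μ * Υ := by
      rw [hμ, div_mul_cancel₀ _ hΥpos.ne']
    rw [← setIntegral_eq_integral_of_forall_compl_eq_zero
      (s := Set.Ioi (0:ℝ)) (fun x hx => ?_)]
    · exact h0
    · have hx0 : x ≤ 0 := by simpa using hx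
      rcases lt_or_eq_of_le hx0 with h | h
      · simp [hψ_def, hfneg x h]
      · simp [hψ_def, h]
  have hμnn : 0 ≤ μ := by
    rw [hμ]
    refine div_nonneg (setIntegral_nonneg measurableSet_Ioi fun x hx => ?_) hΥpos.le
    exact mul_nonneg (le_of_lt hx) (hf_nn x)
  -- Θ positivity
  have hTk : T < k := by
    have h1 : T / k < 1 := by linarith
    exact (div_lt_one hkpos).mp h1
  set Θ : ℝ := ((k:ℝ) - T) / N - μ with hΘ_def
  have hΘpos : 0 < Θ := by
    have h2 : μ < ((k:ℝ) - T) / k := by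
      rw [sub_div, div_self hkpos.ne']
      have := hsmall; linarith
    have h3 : ((k:ℝ) - T) / k ≤ ((k:ℝ) - T) / N := by
      gcongr
      · linarith
    simp only [hΘ_def]; linarith
  -- second moment
  set sqf : ℝ → ℝ := fun u => u^2 * f u with hsqf_def
  have hsq_nn : ∀ u, 0 ≤ sqf u := fun u => mul_nonneg (sq_nonneg u) (hf_nn u)
  have hsq_le : ∀ u, sqf u ≤ T * ψ u := by
    intro u
    by_cases hu : u ∈ Set.Icc 0 T
    · have h1 := hu.1; have h2 := hu.2; have h3 := hf_nn u
      have h4 := mul_nonneg h1 h3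
      have h5 := mul_le_mul_of_nonneg_right h2 h4
      simp only [hsqf_def, hψ_def]; nlinarith [h4, h5]
    · simp [hsqf_def, hψ_def, hf0 u hu]
  have hsq_int : Integrable sqf := by
    refine (hψ_int.const_mul T).mono'
      ((measurable_id.pow_const 2).mul hf_meas).aestronglyMeasurable
      (Filter.Eventually.of_forall fun u => ?_)
    rw [Real.norm_eq_abs, abs_of_nonneg (hsq_nn u)]
    exact hsq_le u
  have hsq_val : ∫ u, sqf u ≤ T * (μ * Υ) := by
    calc ∫ u, sqf u ≤ ∫ u, T * ψ u :=
          integral_mono hsq_int (hψ_int.const_mul T) hsq_le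
      _ = T * ∫ u, ψ u := integral_const_mul T ψ
      _ = T * (μ * Υ) := by rw [hψ_val]
  -- centered moments
  set φ : ℝ → ℝ := fun u => (u - μ) * f u with hφ_def
  have hφ_eq : φ = fun u => ψ u - μ * f u := by
    funext u; simp only [hφ_def, hψ_def]; ring
  have hφ_int : Integrable φ := by
    rw [hφ_eq]; exact hψ_int.sub (hf_int.const_mul μ)
  have hφ_val : ∫ u, φ u = 0 := by
    rw [hφ_eq, integral_sub hψ_int (hf_int.const_mul μ), integral_const_mul, hψ_val, hΥ']
    ring
  set ξ : ℝ → ℝ := fun u => (u - μ)^2 * f u with hξ_def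
  have hξ_eq : ξ = fun u => sqf u - 2*μ*ψ u + μ^2 * f u := by
    funext u; simp only [hξ_def, hsqf_def, hψ_def]; ring
  have hξ_int : Integrable ξ := by
    rw [hξ_eq]
    exact (hsq_int.sub (hψ_int.const_mul _)).add (hf_int.const_mul _)
  have hξ_val : ∫ u, ξ u ≤ T * μ * Υ := by
    simp only [hξ_eq]
    have e1 : Integrable (fun u => sqf u - 2*μ*ψ u) := hsq_int.sub (hψ_int.const_mul (2*μ))
    rw [integral_add e1 (hf_int.const_mul (μ^2)),
      integral_sub hsq_int (hψ_int.const_mul (2*μ)), integral_const_mul, integral_const_mul,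
      hψ_val, hΥ']
    nlinarith [sq_nonneg μ, hΥpos.le, hμnn]
  -- rescaled versions
  set φ' : ℝ → ℝ := fun v => ((v - μ)/N) * f v with hφ'_def
  have hφ'_eq : φ' = fun v => (1/N) * φ v := by
    funext v; simp only [hφ'_def, hφ_def]; ring
  have hφ'_int : Integrable φ' := by rw [hφ'_eq]; exact hφ_int.const_mul _
  have hφ'_val : ∫ v, φ' v = 0 := by
    rw [hφ'_eq, integral_const_mul, hφ_val, mul_zero]
  set ξ' : ℝ → ℝ := fun v => ((v - μ)/N)^2 * f v with hξ'_def
  have hξ'_eq : ξ' = fun v => (1/N^2) * ξ v := by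
    funext v; simp only [hξ'_def, hξ_def]; field_simp
  have hξ'_int : Integrable ξ' := by rw [hξ'_eq]; exact hξ_int.const_mul _
  have hξ'_val : ∫ v, ξ' v = (∫ v, ξ v) / N^2 := by
    rw [hξ'_eq, integral_const_mul]; ring
  -- product space setup
  set ι := Fin (k-1) with hι_def
  have hcard : Fintype.card ι = k - 1 := Fintype.card_fin _
  set F : (ι → ℝ) → ℝ := fun u => ∏ j, f (u j) with hF_def
  have hF_nn : ∀ u, 0 ≤ F u := fun u => Finset.prod_nonneg fun j _ => hf_nn (u j)
  have hF_int : Integrable F := Integrable.fintype_prod (f := fun _ : ι => f) fun _ => hf_int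
  -- the terms of the expansion
  set P : ι → ι → (ι → ℝ) → ℝ :=
    fun i j u => ((u i - μ)/N) * ((u j - μ)/N) * F u with hP_def
  -- diagonal terms
  have hdiag : ∀ i : ι, P i i = fun u => ∏ l, (if l = i then ξ' else f) (u l) := by
    intro i
    funext u
    have h1 : ∏ l, (if l = i then ξ' else f) (u l)
        = (if i = i then ξ' else f) (u i)
          * ∏ l ∈ Finset.univ.erase i, (if l = i then ξ' else f) (u l) :=
      (Finset.mul_prod_erase _ _ (Finset.mem_univ i)).symm
    have h2 : ∏ l ∈ Finset.univ.erase i, (if l = i then ξ' else f) (u l)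
        = ∏ l ∈ Finset.univ.erase i, f (u l) :=
      Finset.prod_congr rfl fun l hl => by simp [Finset.ne_of_mem_erase hl]
    have h3 : F u = f (u i) * ∏ l ∈ Finset.univ.erase i, f (u l) :=
      (Finset.mul_prod_erase _ _ (Finset.mem_univ i)).symm
    rw [h1, h2, if_pos rfl]
    simp only [hP_def, hξ'_def, h3]
    ring
  have hdiag_int : ∀ i : ι, Integrable (P i i) := by
    intro i
    rw [hdiag i]
    exact Integrable.fintype_prod fun l => by
      by_cases h : l = i <;> simp [h, hξ'_int, hf_int]
  have hdiag_val : ∀ i : ι, ∫ u, P i i u = (∫ v, ξ' v) * Υ^(k-1-1) := by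
    intro i
    rw [hdiag i, MeasureTheory.integral_fintype_prod_volume_eq_prod]
    rw [← Finset.mul_prod_erase _ _ (Finset.mem_univ i), if_pos rfl]
    congr 1
    rw [Finset.prod_congr rfl (fun l hl => by
      rw [if_neg (Finset.ne_of_mem_erase hl)]), Finset.prod_congr rfl
      (fun l _ => hΥ'), Finset.prod_const, Finset.card_erase_of_mem (Finset.mem_univ i),
      Finset.card_univ, hcard]
  -- off-diagonal terms
  have hoff : ∀ i j : ι, i ≠ j →
      P i j = fun u => ∏ l, (if l = i ∨ l = j then φ' else f) (u l) := by
    intro i j hij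
    funext u
    have hji : j ∈ Finset.univ.erase i := Finset.mem_erase.mpr ⟨Ne.symm hij, Finset.mem_univ j⟩
    have h1 : ∀ e : ι → ℝ, ∏ l, e l = e i * (e j * ∏ l ∈ (Finset.univ.erase i).erase j, e l) := by
      intro e
      rw [← Finset.mul_prod_erase _ _ (Finset.mem_univ i), ← Finset.mul_prod_erase _ _ hji]
    rw [h1 fun l => (if l = i ∨ l = j then φ' else f) (u l)]
    have h2 : ∏ l ∈ (Finset.univ.erase i).erase j, (if l = i ∨ l = j then φ' else f) (u l)
        = ∏ l ∈ (Finset.univ.erase i).erase j, f (u l) := by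
      refine Finset.prod_congr rfl fun l hl => ?_
      have hlj := Finset.ne_of_mem_erase hl
      have hli := Finset.ne_of_mem_erase (Finset.mem_of_mem_erase hl)
      simp [hli, hlj]
    rw [h2, if_pos (Or.inl rfl), if_pos (Or.inr rfl)]
    have h3 : F u = f (u i) * (f (u j) * ∏ l ∈ (Finset.univ.erase i).erase j, f (u l)) :=
      h1 fun l => f (u l)
    simp only [hP_def, hφ'_def, h3]
    ring
  have hoff_int : ∀ i j : ι, i ≠ j → Integrable (P i j) := by
    intro i j hij
    rw [hoff i j hij]
    exact Integrable.fintype_prod fun l => by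
      by_cases h : l = i ∨ l = j <;> simp [h, hφ'_int, hf_int]
  have hoff_val : ∀ i j : ι, i ≠ j → ∫ u, P i j u = 0 := by
    intro i j hij
    rw [hoff i j hij, MeasureTheory.integral_fintype_prod_volume_eq_prod]
    refine Finset.prod_eq_zero (Finset.mem_univ i) ?_
    simp [hφ'_val]
  have hP_int : ∀ i j : ι, Integrable (P i j) := by
    intro i j
    by_cases h : i = j
    · subst h; exact hdiag_int i
    · exact hoff_int i j h
  -- the quadratic weight G
  set G : (ι → ℝ) → ℝ := fun u => ((∑ j, u j)/N - μ)^2 * F u with hG_def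
  have hG_nn : ∀ u, 0 ≤ G u := fun u => mul_nonneg (sq_nonneg _) (hF_nn u)
  have hGpt : G = fun u => ∑ i, ∑ j, P i j u := by
    funext u
    have ha : (∑ j, u j)/N - μ = ∑ i, (u i - μ)/N := by
      have h1 : ∑ i, (u i - μ) = (∑ i, u i) - N * μ := by
        rw [Finset.sum_sub_distrib, Finset.sum_const, Finset.card_univ, hcard,
          nsmul_eq_mul, hKN]
      rw [← Finset.sum_div, h1, sub_div, mul_div_cancel_left₀ _ hNpos.ne']
    simp only [hG_def, ha, sq, Finset.sum_mul_sum]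
    simp only [hP_def, Finset.sum_mul]
  have hG_int : Integrable G := by
    rw [hGpt]
    exact integrable_finset_sum _ fun i _ => integrable_finset_sum _ fun j _ => hP_int i j
  have hG_val : ∫ u, G u = N * ((∫ v, ξ' v) * Υ^(k-1-1)) := by
    rw [hGpt, integral_finset_sum _ fun i _ =>
      integrable_finset_sum _ fun j _ => hP_int i j]
    rw [Finset.sum_congr rfl fun i _ => integral_finset_sum _ fun j _ => hP_int i j]
    have : ∀ i : ι, ∑ j, ∫ u, P i j u = (∫ v, ξ' v) * Υ^(k-1-1) := by
      intro i
      rw [Finset.sum_eq_single i (fun j _ hj => hoff_val i j (Ne.symm hj))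
        (fun h => absurd (Finset.mem_univ i) h)]
      exact hdiag_val i
    rw [Finset.sum_congr rfl fun i _ => this i, Finset.sum_const, Finset.card_univ, hcard,
      nsmul_eq_mul, hKN]
  have hpow : Υ^(k-1) = Υ * Υ^(k-1-1) := by
    rw [← pow_succ']
    congr 1
    omega
  have hG_le : ∫ u, G u ≤ T * μ * Υ^(k-1) / N := by
    rw [hG_val, hξ'_val, hpow]
    have hΥpow : (0:ℝ) ≤ Υ^(k-1-1) := by positivity
    have h1 : N * ((∫ v, ξ v) / N ^ 2 * Υ ^ (k - 1 - 1))
        = (∫ v, ξ v) * Υ ^ (k-1-1) / N := by field_simp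
    rw [h1]
    have h2 : (∫ v, ξ v) * Υ ^ (k-1-1) ≤ (T * μ * Υ) * Υ ^ (k-1-1) := by
      apply mul_le_mul_of_nonneg_right hξ_val hΥpow
    calc (∫ v, ξ v) * Υ ^ (k-1-1) / N ≤ (T * μ * Υ) * Υ ^ (k-1-1) / N := by
          apply div_le_div_of_nonneg_right h2 hNpos.le
      _ = T * μ * (Υ * Υ^(k-1-1)) / N := by ring
  -- the set S
  set S : Set (ι → ℝ) := {u | (∀ j, 0 ≤ u j) ∧ (k:ℝ) - T < ∑ j, u j} with hS_def
  have hS_meas : MeasurableSet S := by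
    rw [hS_def, Set.setOf_and]
    apply MeasurableSet.inter
    · rw [Set.setOf_forall]
      exact MeasurableSet.iInter fun j =>
        measurableSet_le measurable_const (measurable_pi_apply j)
    · exact measurableSet_lt measurable_const (Finset.measurable_sum _ fun j _ =>
        measurable_pi_apply j)
  -- main chain
  have step1 : ∫ u in S, F u ≤ ∫ u in S, (1/Θ^2) * G u := by
    refine setIntegral_mono_on hF_int.integrableOn (hG_int.const_mul _).integrableOn
      hS_meas fun u hu => ?_
    obtain ⟨hnn, hsum⟩ := hu
    have hs : Θ ≤ (∑ j, u j)/N - μ := by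
      have h1 : ((k:ℝ) - T)/N ≤ (∑ j, u j)/N := by
        apply div_le_div_of_nonneg_right hsum.le hNpos.le
      simp only [hΘ_def]; linarith
    have h1 : Θ^2 ≤ ((∑ j, u j)/N - μ)^2 := pow_le_pow_left₀ hΘpos.le hs 2
    have hΘ2 : (0:ℝ) < Θ^2 := by positivity
    calc F u = (1/Θ^2) * (Θ^2 * F u) := by field_simp
      _ ≤ (1/Θ^2) * (((∑ j, u j)/N - μ)^2 * F u) := by
          apply mul_le_mul_of_nonneg_left
            (mul_le_mul_of_nonneg_right h1 (hF_nn u)) (by positivity)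
  have step2 : ∫ u in S, (1/Θ^2) * G u ≤ (1/Θ^2) * ∫ u, G u := by
    rw [integral_const_mul]
    exact mul_le_mul_of_nonneg_left
      (setIntegral_le_integral hG_int (Filter.Eventually.of_forall hG_nn)) (by positivity)
  have step3 : (1/Θ^2) * ∫ u, G u ≤ Υ^(k-1) * (μ * T / (N * Θ^2)) := by
    have := mul_le_mul_of_nonneg_left hG_le (by positivity : (0:ℝ) ≤ 1/Θ^2)
    refine le_trans this (le_of_eq ?_)
    field_simp
  calc ∫ u in S, F u ≤ ∫ u in S, (1/Θ^2) * G u := step1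
    _ ≤ (1/Θ^2) * ∫ u, G u := step2
    _ ≤ Υ^(k-1) * (μ * T / (N * Θ^2)) := step3
end

section
/- Let g : [0,∞) → ℝ be nonnegative measurable with support in [0,T], Υ = ∫₀^∞ g(u)² du, and μ = ∫₀^∞ u g(u)² du / Υ with μ + T/k < 1. Then ∫_{Δ_k(1)} ∏_{j=1}^k g(k t_j)² dt ≥ (Υ^{k−1}/k^k)·(1 − T/(k(1 − T/k − μ)²))·∫₀^∞ g(u)² du. -/
open MeasureTheory Real Set

set_option maxHeartbeats 1000000

theorem stmt_11 (k : ℕ) (hk : 2 ≤ k) (T : ℝ) (hT : 0 < T) (hTk : T ≤ k)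
    (g : ℝ → ℝ) (Υ μ : ℝ)
    (hg_meas : Measurable g) (hg_nonneg : ∀ u, 0 ≤ g u)
    (hg_supp : ∀ u, u ∉ Set.Icc 0 T → g u = 0)
    (hΥ : ∫ u in Set.Ioi (0:ℝ), (g u)^2 = Υ) (hΥpos : 0 < Υ)
    (hμ : μ = (∫ u in Set.Ioi (0:ℝ), u * (g u)^2) / Υ)
    (hsmall : μ + T / k < 1) :
    ∫ t in {t : Fin k → ℝ | (∀ j, 0 ≤ t j) ∧ ∑ j, t j ≤ 1},
        ∏ j, (g ((k:ℝ) * t j))^2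
      ≥ (Υ^(k-1) / (k:ℝ)^k) * (1 - T / ((k:ℝ) * (1 - T/(k:ℝ) - μ)^2)) *
          ∫ u in Set.Ioi (0:ℝ), (g u)^2 := by
  set f : ℝ → ℝ := fun u => (g u)^2 with hfdef
  have hf_meas : Measurable f := hg_meas.pow_const 2
  have hf_nonneg : ∀ u, 0 ≤ f u := fun u => sq_nonneg _
  have hf_zero : ∀ u, u ∉ Set.Icc 0 T → f u = 0 := by
    intro u hu; simp [hfdef, hg_supp u hu]
  -- f is integrable on (0,∞)
  have hf_int_Ioi : IntegrableOn f (Ioi (0:ℝ)) := by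
    by_contra h
    rw [integral_undef h] at hΥ
    exact absurd hΥ.symm (ne_of_gt hΥpos)
  -- f agrees a.e. with its indicator on (0,∞)
  have hf_ae : f =ᵐ[volume] (Ioi (0:ℝ)).indicator f := by
    have : {x : ℝ | f x ≠ (Ioi (0:ℝ)).indicator f x} ⊆ {0} := by
      intro x hx
      simp only [mem_setOf_eq] at hx
      by_contra hx0
      rcases lt_trichotomy x 0 with h | h | h
      · refine hx ?_
        rw [hf_zero x (fun hmem => absurd hmem.1 (not_le.mpr h)),
          indicator_of_notMem (by simpa using h.not_gt)]
      · exact hx0 h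
      · exact hx (by simp [indicator_of_mem (mem_Ioi.mpr h)])
    have h0 : volume ({(0:ℝ)} : Set ℝ) = 0 := measure_singleton 0
    exact measure_mono_null this h0
  have hf_int : Integrable f := by
    refine (integrable_indicator_iff measurableSet_Ioi).mpr hf_int_Ioi |>.congr hf_ae.symm
  have hint_f : ∫ u, f u = Υ := by
    rw [integral_congr_ae hf_ae, integral_indicator measurableSet_Ioi, hΥ]
  -- first moment
  have hbound1 : ∀ u : ℝ, ‖u * f u‖ ≤ T * f u := by
    intro u
    by_cases hu : u ∈ Icc 0 T
    · rw [Real.norm_eq_abs, abs_of_nonneg (mul_nonneg hu.1 (hf_nonneg u))]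
      exact mul_le_mul_of_nonneg_right hu.2 (hf_nonneg u)
    · simp [hf_zero u hu]
  have huf_int : Integrable (fun u => u * f u) := by
    refine Integrable.mono (hf_int.const_mul T) ?_ (Filter.Eventually.of_forall ?_)
    · exact (measurable_id.mul hf_meas).aestronglyMeasurable
    · intro u
      calc ‖u * f u‖ ≤ T * f u := hbound1 u
        _ ≤ ‖T * f u‖ := le_abs_self _
  have huf_eqIoi : (fun u => u * f u) = (Ioi (0:ℝ)).indicator (fun u => u * f u) := by
    funext u
    rcases lt_trichotomy u 0 with h | h | h
    · rw [indicator_of_notMem (by simpa using h.not_gt),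
        hf_zero u (fun hmem => absurd hmem.1 (not_le.mpr h)), mul_zero]
    · simp [h]
    · rw [indicator_of_mem (mem_Ioi.mpr h)]
  have hμΥ : ∫ u, u * f u = μ * Υ := by
    rw [huf_eqIoi, integral_indicator measurableSet_Ioi]
    rw [hμ]; field_simp; rfl
  have hμ_nonneg : 0 ≤ μ := by
    rw [hμ]
    apply div_nonneg _ hΥpos.le
    apply setIntegral_nonneg measurableSet_Ioi
    intro u hu; exact mul_nonneg (le_of_lt hu) (hf_nonneg u)
  have hK0 : (0:ℝ) < k := by positivity
  have hμ_lt1 : μ < 1 := by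
    have : 0 < T / k := div_pos hT hK0
    linarith
  -- second moment
  have hu2f_int : Integrable (fun u => u^2 * f u) := by
    refine Integrable.mono (huf_int.const_mul T) ?_ (Filter.Eventually.of_forall ?_)
    · exact ((measurable_id.pow_const 2).mul hf_meas).aestronglyMeasurable
    · intro u
      rw [Real.norm_eq_abs, abs_of_nonneg (mul_nonneg (sq_nonneg u) (hf_nonneg u))]
      by_cases hu : u ∈ Icc 0 T
      · calc u^2 * f u = u * (u * f u) := by ring
          _ ≤ T * (u * f u) :=
              mul_le_mul_of_nonneg_right hu.2 (mul_nonneg hu.1 (hf_nonneg u))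
          _ ≤ ‖T * (u * f u)‖ := le_abs_self _
      · simp [hf_zero u hu]
  have hm2_le : ∫ u, u^2 * f u ≤ T * (μ * Υ) := by
    calc ∫ u, u^2 * f u ≤ ∫ u, T * (u * f u) := by
          refine integral_mono hu2f_int (huf_int.const_mul T) ?_
          intro u
          by_cases hu : u ∈ Icc 0 T
          · calc u^2 * f u = u * (u * f u) := by ring
              _ ≤ T * (u * f u) :=
                mul_le_mul_of_nonneg_right hu.2 (mul_nonneg hu.1 (hf_nonneg u))
          · simp [hf_zero u hu]
      _ = T * (μ * Υ) := by rw [integral_const_mul _ _, hμΥ]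
  -- centered moments
  have hcent1_int : Integrable (fun u => (u - μ) * f u) := by
    have : (fun u => (u - μ) * f u) = fun u => u * f u - μ * f u := by funext u; ring
    rw [this]; exact huf_int.sub (hf_int.const_mul μ)
  have hcent1 : ∫ u, (u - μ) * f u = 0 := by
    have : (fun u => (u - μ) * f u) = fun u => u * f u - μ * f u := by funext u; ring
    rw [this, integral_sub huf_int (hf_int.const_mul μ), integral_const_mul _ _, hμΥ, hint_f]
    ring
  have hcent2_int : Integrable (fun u => (u - μ)^2 * f u) := by
    have : (fun u => (u - μ)^2 * f u)
        = fun u => u^2 * f u - (2*μ) * (u * f u) + μ^2 * f u := by funext u; ring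
    rw [this]
    exact (hu2f_int.sub (huf_int.const_mul _)).add (hf_int.const_mul _)
  have hV_le : ∫ u, (u - μ)^2 * f u ≤ T * Υ := by
    have he : (fun u => (u - μ)^2 * f u)
        = fun u => u^2 * f u - (2*μ) * (u * f u) + μ^2 * f u := by funext u; ring
    have hA : Integrable (fun u => u^2 * f u - 2*μ*(u*f u)) :=
      hu2f_int.sub (huf_int.const_mul (2*μ))
    have hB : Integrable (fun u => μ^2 * f u) := hf_int.const_mul _
    rw [he, integral_add hA hB, integral_sub hu2f_int (huf_int.const_mul (2*μ)),
      integral_const_mul (2*μ), integral_const_mul (μ^2), hμΥ, hint_f]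
    nlinarith [hm2_le, mul_nonneg (mul_nonneg hT.le (sub_nonneg.mpr hμ_lt1.le)) hΥpos.le,
      mul_nonneg (mul_nonneg hμ_nonneg hμ_nonneg) hΥpos.le]
  have hV_nonneg : 0 ≤ ∫ u, (u - μ)^2 * f u :=
    integral_nonneg (fun u => mul_nonneg (sq_nonneg _) (hf_nonneg u))
  -- scaled one-dimensional functions
  set K : ℝ := (k:ℝ) with hKdef
  have hKne : K ≠ 0 := ne_of_gt hK0
  have habsK : |K⁻¹| = 1/K := by
    rw [abs_of_pos (inv_pos.mpr hK0), one_div]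
  have hφ_int : Integrable (fun u => f (K * u)) := hf_int.comp_mul_left' hKne
  have hψ_int : Integrable (fun u => (K * u - μ) * f (K * u)) :=
    hcent1_int.comp_mul_left' hKne
  have hχ_int : Integrable (fun u => (K * u - μ)^2 * f (K * u)) :=
    hcent2_int.comp_mul_left' hKne
  have hφ_val : ∫ u, f (K * u) = Υ / K := by
    rw [Measure.integral_comp_mul_left f K, habsK, smul_eq_mul, hint_f]; ring
  have hψ_val : ∫ u, (K * u - μ) * f (K * u) = 0 := by
    rw [Measure.integral_comp_mul_left (fun v => (v - μ) * f v) K, hcent1, smul_zero]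
  set V : ℝ := ∫ u, (u - μ)^2 * f u with hVdef
  have hχ_val : ∫ u, (K * u - μ)^2 * f (K * u) = V / K := by
    rw [Measure.integral_comp_mul_left (fun v => (v - μ)^2 * f v) K, habsK, smul_eq_mul]
    ring
  -- the product function on the pi space
  set F : (Fin k → ℝ) → ℝ := fun t => ∏ j, f (K * t j) with hFdef
  have hF_int : Integrable F := Integrable.fintype_prod (fun _ => hφ_int)
  have hF_nonneg : ∀ t, 0 ≤ F t := fun t => Finset.prod_nonneg fun j _ => hf_nonneg _
  have hF_val : ∫ t, F t = (Υ / K)^k := by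
    rw [hFdef]
    rw [volume_pi, integral_fintype_prod_eq_pow (fun u : ℝ => f (K * u)), hφ_val,
      Fintype.card_fin]
  -- per-pair coordinate functions
  set c : Fin k → Fin k → Fin k → ℝ → ℝ :=
    fun i j l u => ((if l = i then K * u - μ else 1) * (if l = j then K * u - μ else 1))
      * f (K * u) with hcdef
  have hc_int : ∀ i j l, Integrable (c i j l) := by
    intro i j l
    rcases eq_or_ne l i with rfl | hi <;> rcases eq_or_ne l j with rfl | hj
    · have : c l l l = fun u => (K * u - μ)^2 * f (K * u) := by
        funext u; simp only [hcdef, if_true]; ring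
      rw [this]; exact hχ_int
    · have : c l j l = fun u => (K * u - μ) * f (K * u) := by
        funext u; simp only [hcdef, if_true]; rw [if_neg hj]; ring
      rw [this]; exact hψ_int
    · have : c i l l = fun u => (K * u - μ) * f (K * u) := by
        funext u; simp only [hcdef, if_true]; rw [if_neg hi]; ring
      rw [this]; exact hψ_int
    · have : c i j l = fun u => f (K * u) := by
        funext u; simp only [hcdef]; rw [if_neg hi, if_neg hj]; ring
      rw [this]; exact hφ_int
  have hc_val_ii : ∀ i, ∫ u, c i i i u = V / K := by
    intro i
    have : c i i i = fun u => (K * u - μ)^2 * f (K * u) := by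
      funext u; simp only [hcdef, if_true]; ring
    rw [this, hχ_val]
  have hc_val_diag_off : ∀ i l, l ≠ i → ∫ u, c i i l u = Υ / K := by
    intro i l hl
    have : c i i l = fun u => f (K * u) := by
      funext u; simp only [hcdef]; rw [if_neg hl]; ring
    rw [this, hφ_val]
  have hc_val_psi : ∀ i j, i ≠ j → ∫ u, c i j i u = 0 := by
    intro i j hij
    have : c i j i = fun u => (K * u - μ) * f (K * u) := by
      funext u; simp only [hcdef, if_true]; rw [if_neg hij]; ring
    rw [this, hψ_val]
  -- product expansion
  have hprod : ∀ (i j : Fin k) (t : Fin k → ℝ),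
      (∏ l, c i j l (t l)) = (K * t i - μ) * ((K * t j - μ) * F t) := by
    intro i j t
    simp only [hcdef, hFdef, Finset.prod_mul_distrib, Finset.prod_ite_eq',
      Finset.mem_univ, if_true]
    ring
  set H : (Fin k → ℝ) → ℝ := fun t => (∑ j, (K * t j - μ))^2 * F t with hHdef
  have hH_nonneg : ∀ t, 0 ≤ H t := fun t => mul_nonneg (sq_nonneg _) (hF_nonneg t)
  have hHsum : H = fun t => ∑ i, ∑ j, ∏ l, c i j l (t l) := by
    funext t
    show (∑ j, (K * t j - μ))^2 * F t = _
    rw [pow_two, Finset.sum_mul_sum, Finset.sum_mul]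
    refine Finset.sum_congr rfl fun i _ => ?_
    rw [Finset.sum_mul]
    refine Finset.sum_congr rfl fun j _ => ?_
    rw [hprod i j t]; ring
  have hterm_int : ∀ i j, Integrable (fun t : Fin k → ℝ => ∏ l, c i j l (t l)) :=
    fun i j => Integrable.fintype_prod (fun l => hc_int i j l)
  have hH_int : Integrable H := by
    rw [hHsum]
    exact integrable_finset_sum _
      (fun i _ => integrable_finset_sum _ (fun j _ => hterm_int i j))
  have hterm_val : ∀ i j, (∫ t : Fin k → ℝ, ∏ l, c i j l (t l))
      = if i = j then (V / K) * (Υ / K)^(k-1) else 0 := by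
    intro i j
    rw [volume_pi, integral_fintype_prod_eq_prod]
    rcases eq_or_ne i j with rfl | hij
    · rw [if_pos rfl, ← Finset.mul_prod_erase Finset.univ _ (Finset.mem_univ i)]
      have h2 : ∀ l ∈ Finset.univ.erase i, (∫ u, c i i l u) = Υ / K :=
        fun l hl => hc_val_diag_off i l (Finset.ne_of_mem_erase hl)
      rw [Finset.prod_congr rfl h2, Finset.prod_const,
        Finset.card_erase_of_mem (Finset.mem_univ i), Finset.card_univ, Fintype.card_fin,
        hc_val_ii]
    · rw [if_neg hij]
      exact Finset.prod_eq_zero (Finset.mem_univ i) (hc_val_psi i j hij)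
  have hH_val : ∫ t, H t = V * (Υ / K)^(k-1) := by
    rw [hHsum, integral_finset_sum _
      (fun i _ => integrable_finset_sum _ (fun j _ => hterm_int i j))]
    have hinner : ∀ i ∈ Finset.univ, (∫ t : Fin k → ℝ, ∑ j, ∏ l, c i j l (t l))
        = (V / K) * (Υ / K)^(k-1) := by
      intro i _
      rw [integral_finset_sum _ (fun j _ => hterm_int i j),
        Finset.sum_congr rfl (fun j _ => hterm_val i j), Finset.sum_ite_eq]
      simp
    rw [Finset.sum_congr rfl hinner, Finset.sum_const, Finset.card_univ, Fintype.card_fin,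
      nsmul_eq_mul]
    field_simp
    ring
  -- Chebyshev step
  set Δ : ℝ := 1 - T / K - μ with hΔdef
  have hΔpos : 0 < Δ := by rw [hΔdef]; linarith
  have hΔle : Δ ≤ 1 - μ := by
    rw [hΔdef]; have : 0 < T / K := div_pos hT hK0; linarith
  set B : Set (Fin k → ℝ) := {t | ∑ j, t j ≤ 1} with hBdef
  have hB_meas : MeasurableSet B := by
    apply measurableSet_le
    · exact Finset.measurable_sum _ (fun j _ => measurable_pi_apply j)
    · exact measurable_const
  set S : Set (Fin k → ℝ) := {t | (∀ j, 0 ≤ t j) ∧ ∑ j, t j ≤ 1} with hSdef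
  have hS_meas : MeasurableSet S := by
    have hSeq : S = (⋂ j, {t : Fin k → ℝ | 0 ≤ t j}) ∩ B := by
      ext t
      simp only [hSdef, hBdef, Set.mem_setOf_eq, Set.mem_inter_iff, Set.mem_iInter]
    rw [hSeq]
    exact (MeasurableSet.iInter fun j =>
      measurableSet_le measurable_const (measurable_pi_apply j)).inter hB_meas
  have hind : S.indicator F = B.indicator F := by
    funext t
    by_cases htS : t ∈ S
    · have htB : t ∈ B := htS.2
      rw [Set.indicator_of_mem (s := S) htS, Set.indicator_of_mem (s := B) htB]
    · by_cases htB : t ∈ B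
      · rw [Set.indicator_of_notMem (s := S) htS, Set.indicator_of_mem (s := B) htB]
        have hne : ¬ ∀ j, 0 ≤ t j := fun h => htS ⟨h, htB⟩
        push_neg at hne
        obtain ⟨j, hj⟩ := hne
        symm
        rw [hFdef]
        apply Finset.prod_eq_zero (Finset.mem_univ j)
        apply hf_zero
        intro hmem
        have h0 : (0:ℝ) ≤ K * t j := hmem.1
        nlinarith
      · rw [Set.indicator_of_notMem (s := S) htS, Set.indicator_of_notMem (s := B) htB]
  have hSint_eq : ∫ t in S, F t = ∫ t in B, F t := by
    rw [← integral_indicator hS_meas, ← integral_indicator hB_meas, hind]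
  have hsplit : ∫ t in B, F t = (∫ t, F t) - ∫ t in Bᶜ, F t := by
    have h := integral_add_compl hB_meas hF_int
    linarith
  have hKΔpos : 0 < K * Δ := mul_pos hK0 hΔpos
  have hcheb : ∫ t in Bᶜ, F t ≤ ((K * Δ)⁻¹)^2 * ∫ t, H t := by
    have hpt : ∀ t ∈ Bᶜ, F t ≤ ((K * Δ)⁻¹)^2 * H t := by
      intro t ht
      have h1 : 1 < ∑ j, t j := not_le.mp ht
      have hsum : K * Δ ≤ ∑ j, (K * t j - μ) := by
        have heq : ∑ j, (K * t j - μ) = K * (∑ j, t j) - (k:ℝ) * μ := by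
          rw [Finset.sum_sub_distrib, ← Finset.mul_sum, Finset.sum_const,
            Finset.card_univ, Fintype.card_fin, nsmul_eq_mul]
        rw [heq, ← hKdef]
        have e1 : K * Δ ≤ K * (1 - μ) := mul_le_mul_of_nonneg_left hΔle hK0.le
        have e2 : K * 1 < K * (∑ j, t j) := by
          exact mul_lt_mul_of_pos_left h1 hK0
        nlinarith
      have hsq : (K*Δ)^2 ≤ (∑ j, (K * t j - μ))^2 :=
        pow_le_pow_left₀ hKΔpos.le hsum 2
      have hHt : H t = (∑ j, (K * t j - μ))^2 * F t := by rw [hHdef]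
      rw [hHt]
      calc F t = ((K*Δ)⁻¹)^2 * ((K*Δ)^2 * F t) := by
            field_simp
        _ ≤ ((K*Δ)⁻¹)^2 * ((∑ j, (K * t j - μ))^2 * F t) := by
            refine mul_le_mul_of_nonneg_left ?_ (by positivity)
            exact mul_le_mul_of_nonneg_right hsq (hF_nonneg t)
    calc ∫ t in Bᶜ, F t ≤ ∫ t in Bᶜ, ((K*Δ)⁻¹)^2 * H t :=
          setIntegral_mono_on hF_int.integrableOn
            ((hH_int.const_mul _).integrableOn) hB_meas.compl hpt
      _ = ((K*Δ)⁻¹)^2 * ∫ t in Bᶜ, H t := integral_const_mul _ _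
      _ ≤ ((K*Δ)⁻¹)^2 * ∫ t, H t := by
          refine mul_le_mul_of_nonneg_left ?_ (by positivity)
          exact setIntegral_le_integral hH_int (Filter.Eventually.of_forall hH_nonneg)
  -- final assembly
  have hBc_le : ∫ t in Bᶜ, F t ≤ ((K*Δ)⁻¹)^2 * (T * Υ * (Υ / K)^(k-1)) := by
    refine hcheb.trans ?_
    rw [hH_val]
    refine mul_le_mul_of_nonneg_left ?_ (by positivity)
    exact mul_le_mul_of_nonneg_right hV_le (by positivity)
  have hRHS : (∫ u in Set.Ioi (0:ℝ), f u) = Υ := hΥ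
  rw [ge_iff_le]
  have hfinal : (Υ/K)^k - ((K*Δ)⁻¹)^2 * (T * Υ * (Υ / K)^(k-1))
      = (Υ^(k-1) / K^k) * (1 - T / (K * Δ^2)) * Υ := by
    have hk1 : k - 1 + 1 = k := Nat.succ_pred_eq_of_pos (lt_of_lt_of_le (by norm_num) hk)
    rw [div_pow, div_pow, ← hk1, pow_succ, pow_succ]
    have hΥne : Υ ≠ 0 := ne_of_gt hΥpos
    have hΔne : Δ ≠ 0 := ne_of_gt hΔpos
    have hKk : (K:ℝ)^(k-1) ≠ 0 := pow_ne_zero _ hKne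
    field_simp
    rw [show k - 1 + 1 - 1 = k - 1 by omega]
    ring
  calc (Υ^(k-1) / K^k) * (1 - T / (K * Δ^2)) * ∫ u in Set.Ioi (0:ℝ), f u
      = (Υ/K)^k - ((K*Δ)⁻¹)^2 * (T * Υ * (Υ / K)^(k-1)) := by rw [hRHS, hfinal]
    _ ≤ (∫ t, F t) - ∫ t in Bᶜ, F t := by
        rw [hF_val]; linarith
    _ = ∫ t in S, F t := by rw [hSint_eq, hsplit]
    _ = ∫ t in S, ∏ j, (g (K * t j))^2 := rfl
end
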